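/- Let A = (a_{st}) ∈ M(n,ℍ) and fix i ∈ {1,…,n}. Then rdet_i A = Σ_{j=1}^n a_{ij} · R_{ij}, where the right ij-th cofactor is R_{ij} = −rdet_j (A^{ii}_{.j}(a_{.i})) for j ≠ i and R_{ii} = rdet_k (A^{ii}) with k = min({1,…,n} \ {i}); here A^{ii} denotes the matrix obtained from A by deleting its i-th row and i-th column, a_{.i} denotes the i-th column of A, and A^{ii}_{.j}(a_{.i}) is obtained from A by replacing the j-th column with the i-th column and then deleting both the i-th row and the i-th column. -/

import Mathlib

open scoped Quaternion
open Matrix Filter Topology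

noncomputable section

/-- The product of entries along the cycle of `σ` containing `c`, written in left-ordered
cycle notation starting at `c`: `a_{c, σc} a_{σc, σ²c} ⋯ a_{σ^{l}c, c}`. -/
def cycProdL {n : ℕ} (A : Matrix (Fin n) (Fin n) ℍ[ℝ]) (σ : Equiv.Perm (Fin n))
    (c : Fin n) : ℍ[ℝ] :=
  ((List.range (Function.minimalPeriod (⇑σ) c)).map
    fun t => A ((σ ^ t) c) ((σ ^ (t + 1)) c)).prod

/-- The product of entries along the cycle of `σ` containing `c`, written in right-ordered
cycle notation ending at `c`: `a_{c, σ^{l}c} a_{σ^{l}c, σ^{l-1}c} ⋯ a_{σc, c}`. -/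
def cycProdR {n : ℕ} (A : Matrix (Fin n) (Fin n) ℍ[ℝ]) (σ : Equiv.Perm (Fin n))
    (c : Fin n) : ℍ[ℝ] :=
  (((List.range (Function.minimalPeriod (⇑σ) c)).map
    fun t => A ((σ ^ (t + 1)) c) ((σ ^ t) c)).reverse).prod

/-- The number `r` of disjoint cycles (fixed points included) of a permutation:
the number of points that are minimal in their own cycle. -/
def cycCount {n : ℕ} (σ : Equiv.Perm (Fin n)) : ℕ :=
  (Finset.univ.filter fun c : Fin n => ∀ d, σ.SameCycle c d → c ≤ d).card

/-- The `i`-th row determinant of a square quaternion matrix: the cycle containing `i`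
is written first, starting with `i`; all other cycles start with their smallest elements
and are ordered from left to right by increasing first elements. -/
def rdet {n : ℕ} (A : Matrix (Fin n) (Fin n) ℍ[ℝ]) (i : Fin n) : ℍ[ℝ] :=
  ∑ σ : Equiv.Perm (Fin n),
    (-1 : ℍ[ℝ]) ^ (n - cycCount σ) *
      (cycProdL A σ i *
        (((List.finRange n).filter fun c =>
            decide (¬σ.SameCycle i c ∧ ∀ d, σ.SameCycle c d → c ≤ d)).map
          (cycProdL A σ)).prod)

/-- The `j`-th column determinant of a square quaternion matrix: the cycle containing `j`
is written last, ending with `j`; all other cycles end with their smallest elements,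
the last elements increasing from right to left. -/
def cdet {n : ℕ} (A : Matrix (Fin n) (Fin n) ℍ[ℝ]) (j : Fin n) : ℍ[ℝ] :=
  ∑ σ : Equiv.Perm (Fin n),
    (-1 : ℍ[ℝ]) ^ (n - cycCount σ) *
      ((((((List.finRange n).filter fun c =>
            decide (¬σ.SameCycle j c ∧ ∀ d, σ.SameCycle c d → c ≤ d)).map
          (cycProdR A σ)).reverse).prod) * cycProdR A σ j)

/-- The determinant of a Hermitian quaternion matrix (the common value of all row and
column determinants): every cycle is written starting with its smallest element and the
cycles are ordered from left to right by increasing first elements. -/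
def hdet {n : ℕ} (A : Matrix (Fin n) (Fin n) ℍ[ℝ]) : ℍ[ℝ] :=
  ∑ σ : Equiv.Perm (Fin n),
    (-1 : ℍ[ℝ]) ^ (n - cycCount σ) *
      (((List.finRange n).filter fun c =>
          decide (∀ d, σ.SameCycle c d → c ≤ d)).map
        (cycProdL A σ)).prod

/-- The double determinant of a square quaternion matrix. -/
def ddet {n : ℕ} (A : Matrix (Fin n) (Fin n) ℍ[ℝ]) : ℍ[ℝ] := hdet (Aᴴ * A)

/-- The rank of a quaternion matrix: the maximal number of right linearly independent
columns, i.e. the dimension of the right ℍ-span of the columns. -/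
def qrank {m n : ℕ} (A : Matrix (Fin m) (Fin n) ℍ[ℝ]) : ℕ :=
  Module.finrank ℍ[ℝ]ᵐᵒᵖ
    (Submodule.span ℍ[ℝ]ᵐᵒᵖ (Set.range fun j : Fin n => fun i => A i j))

/-- The Frobenius norm of a quaternion matrix. -/
def fnorm {m n : ℕ} (A : Matrix (Fin m) (Fin n) ℍ[ℝ]) : ℝ :=
  Real.sqrt (∑ i, ∑ j, ‖A i j‖ ^ 2)

/-- `X` is the Moore–Penrose inverse of `A`: the four Penrose equations. -/
def IsMP {m n : ℕ} (A : Matrix (Fin m) (Fin n) ℍ[ℝ])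
    (X : Matrix (Fin n) (Fin m) ℍ[ℝ]) : Prop :=
  A * X * A = A ∧ X * A * X = X ∧ (A * X)ᴴ = A * X ∧ (X * A)ᴴ = X * A

/-- The right `ij`-th cofactor of `A`: for `j ≠ i` it is `−rdet_j` of the matrix obtained
from `A` by replacing the `j`-th column with the `i`-th column and deleting the `i`-th row
and column (the index of that column in the submatrix being the unique `t` with
`i.succAbove t = j`); for `j = i` it is `rdet_k` of `A` with the `i`-th row and column
deleted, where `k = min({1,…,n} \ {i})` corresponds to the index `0` of the submatrix. -/
def Rcof {n : ℕ} (A : Matrix (Fin (n + 2)) (Fin (n + 2)) ℍ[ℝ]) (i j : Fin (n + 2)) :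
    ℍ[ℝ] :=
  if j = i then rdet (A.submatrix i.succAbove i.succAbove) 0
  else
    -∑ t ∈ Finset.univ.filter fun t : Fin (n + 1) => i.succAbove t = j,
      rdet ((A.updateCol j fun s => A s i).submatrix i.succAbove i.succAbove) t

namespace RdetAux

open Equiv Equiv.Perm Function List

variable {N : ℕ}

lemma sameCycle_iff_nat {σ : Equiv.Perm (Fin N)} {x y : Fin N} :
    σ.SameCycle x y ↔ ∃ k : ℕ, (σ ^ k) x = y := by
  constructor
  · intro h
    obtain ⟨k, -, hk⟩ := Equiv.Perm.SameCycle.exists_pow_eq' h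
    exact ⟨k, hk⟩
  · rintro ⟨k, rfl⟩
    exact ⟨(k : ℤ), by simp [zpow_natCast]⟩

lemma perm_minimalPeriod_pos (σ : Equiv.Perm (Fin N)) (x : Fin N) :
    0 < Function.minimalPeriod (⇑σ) x := by
  apply Function.IsPeriodicPt.minimalPeriod_pos (orderOf_pos σ)
  show (⇑σ)^[orderOf σ] x = x
  rw [← Equiv.Perm.coe_pow, pow_orderOf_eq_one]
  rfl

lemma perm_pow_minimalPeriod (σ : Equiv.Perm (Fin N)) (x : Fin N) :
    (σ ^ Function.minimalPeriod (⇑σ) x) x = x :=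
  Function.isPeriodicPt_minimalPeriod (⇑σ) x

lemma perm_pow_apply_mod (σ : Equiv.Perm (Fin N)) (x : Fin N) (k : ℕ) :
    (σ ^ (k % Function.minimalPeriod (⇑σ) x)) x = (σ ^ k) x :=
  Function.iterate_mod_minimalPeriod_eq

lemma perm_pow_ne_self (σ : Equiv.Perm (Fin N)) (x : Fin N) {k : ℕ} (h0 : 0 < k)
    (hk : k < Function.minimalPeriod (⇑σ) x) : (σ ^ k) x ≠ x :=
  Function.not_isPeriodicPt_of_pos_of_lt_minimalPeriod h0.ne' hk

section transfer

variable {M : ℕ} {σ : Equiv.Perm (Fin M)} {τ : Equiv.Perm (Fin N)} {g : Fin N → Fin M}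

lemma isPeriodicPt_transfer (hg : Function.Injective g) {x : Fin N}
    (h : ∀ t : ℕ, (σ ^ t) (g x) = g ((τ ^ t) x)) (t : ℕ) :
    Function.IsPeriodicPt (⇑σ) t (g x) ↔ Function.IsPeriodicPt (⇑τ) t x := by
  unfold Function.IsPeriodicPt Function.IsFixedPt
  rw [← Equiv.Perm.coe_pow, ← Equiv.Perm.coe_pow, h t, hg.eq_iff]

lemma minimalPeriod_transfer (hg : Function.Injective g) {x : Fin N}
    (h : ∀ t : ℕ, (σ ^ t) (g x) = g ((τ ^ t) x)) :
    Function.minimalPeriod (⇑σ) (g x) = Function.minimalPeriod (⇑τ) x := by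
  apply _root_.le_antisymm
  · exact Function.IsPeriodicPt.minimalPeriod_le (perm_minimalPeriod_pos τ x)
      ((isPeriodicPt_transfer hg h _).mpr (Function.isPeriodicPt_minimalPeriod _ _))
  · exact Function.IsPeriodicPt.minimalPeriod_le (perm_minimalPeriod_pos σ (g x))
      ((isPeriodicPt_transfer hg h _).mp (Function.isPeriodicPt_minimalPeriod _ _))

lemma sameCycle_transfer (hg : Function.Injective g) {x y : Fin N}
    (h : ∀ t : ℕ, (σ ^ t) (g x) = g ((τ ^ t) x)) :
    σ.SameCycle (g x) (g y) ↔ τ.SameCycle x y := by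
  rw [sameCycle_iff_nat, sameCycle_iff_nat]
  constructor
  · rintro ⟨k, hk⟩; exact ⟨k, hg (by rw [← h k, hk])⟩
  · rintro ⟨k, hk⟩; exact ⟨k, by rw [h k, hk]⟩

lemma min_transfer (hmono : StrictMono g) {x : Fin N}
    (h : ∀ t : ℕ, (σ ^ t) (g x) = g ((τ ^ t) x)) :
    (∀ d, σ.SameCycle (g x) d → g x ≤ d) ↔ ∀ y, τ.SameCycle x y → x ≤ y := by
  constructor
  · intro H y hy
    obtain ⟨k, rfl⟩ := sameCycle_iff_nat.mp hy
    exact hmono.le_iff_le.mp (H (g ((τ ^ k) x)) (sameCycle_iff_nat.mpr ⟨k, h k⟩))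
  · intro H d hd
    obtain ⟨k, rfl⟩ := sameCycle_iff_nat.mp hd
    rw [h k]
    exact hmono.le_iff_le.mpr (H _ (sameCycle_iff_nat.mpr ⟨k, rfl⟩))

lemma cycProdL_transfer (Amat : Matrix (Fin M) (Fin M) ℍ[ℝ])
    (Bmat : Matrix (Fin N) (Fin N) ℍ[ℝ]) (hg : Function.Injective g) {x : Fin N}
    (h : ∀ t : ℕ, (σ ^ t) (g x) = g ((τ ^ t) x))
    (hAB : ∀ t : ℕ, Amat (g ((τ ^ t) x)) (g ((τ ^ (t + 1)) x)) = Bmat ((τ ^ t) x) ((τ ^ (t + 1)) x)) :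
    cycProdL Amat σ (g x) = cycProdL Bmat τ x := by
  unfold cycProdL
  rw [minimalPeriod_transfer hg h]
  congr 1
  apply List.map_congr_left
  intro t _
  rw [h t, h (t + 1), hAB t]

end transfer

section omin

variable (σ : Equiv.Perm (Fin N))

def omin (c : Fin N) : Fin N :=
  (Finset.univ.filter fun d => σ.SameCycle c d).min'
    ⟨c, Finset.mem_filter.mpr ⟨Finset.mem_univ c, Equiv.Perm.SameCycle.refl σ c⟩⟩

lemma omin_sameCycle (c : Fin N) : σ.SameCycle c (omin σ c) := by
  have := Finset.min'_mem (Finset.univ.filter fun d => σ.SameCycle c d)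
    ⟨c, Finset.mem_filter.mpr ⟨Finset.mem_univ c, Equiv.Perm.SameCycle.refl σ c⟩⟩
  exact (Finset.mem_filter.mp this).2

lemma omin_le {c d : Fin N} (h : σ.SameCycle c d) : omin σ c ≤ d :=
  Finset.min'_le _ _ (Finset.mem_filter.mpr ⟨Finset.mem_univ d, h⟩)

lemma omin_min (c : Fin N) : ∀ d, σ.SameCycle (omin σ c) d → omin σ c ≤ d :=
  fun _ h => omin_le σ ((omin_sameCycle σ c).trans h)

lemma min_unique {c d : Fin N} (h : σ.SameCycle c d)
    (hc : ∀ e, σ.SameCycle c e → c ≤ e) (hd : ∀ e, σ.SameCycle d e → d ≤ e) : c = d :=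
  _root_.le_antisymm (hc d h) (hd c h.symm)

end omin

end RdetAux
namespace RdetAux

open Equiv Equiv.Perm Function List

variable {n : ℕ}

def extp (i : Fin (n + 2)) (τ : Equiv.Perm (Fin (n + 1))) : Equiv.Perm (Fin (n + 2)) :=
  τ.extendDomain (finSuccAboveEquiv i)

lemma extp_apply_self (i : Fin (n + 2)) (τ : Equiv.Perm (Fin (n + 1))) : extp i τ i = i :=
  Equiv.Perm.extendDomain_apply_not_subtype _ _ (by simp)

lemma extp_apply_succAbove (i : Fin (n + 2)) (τ : Equiv.Perm (Fin (n + 1))) (x : Fin (n + 1)) :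
    extp i τ (i.succAbove x) = i.succAbove (τ x) := by
  have h := Equiv.Perm.extendDomain_apply_image τ (finSuccAboveEquiv i) x
  simpa [extp, finSuccAboveEquiv_apply] using h

lemma extp_pow (i : Fin (n + 2)) (τ : Equiv.Perm (Fin (n + 1))) (t : ℕ) :
    extp i τ ^ t = extp i (τ ^ t) :=
  (Equiv.Perm.extendDomain_pow (e := τ) (f := finSuccAboveEquiv i) t).symm

def Ψ (i : Fin (n + 2)) (p : Fin (n + 2) × Equiv.Perm (Fin (n + 1))) :
    Equiv.Perm (Fin (n + 2)) :=
  Equiv.swap i p.1 * extp i p.2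

lemma Ψ_bijective (i : Fin (n + 2)) : Function.Bijective (Ψ i) := by
  rw [Fintype.bijective_iff_injective_and_card]
  constructor
  · rintro ⟨j, τ⟩ ⟨j', τ'⟩ h
    have hj : j = j' := by
      have h2 := congrArg (fun σ : Equiv.Perm (Fin (n + 2)) => σ i) h
      simpa [Ψ, Equiv.Perm.mul_apply, extp_apply_self, Equiv.swap_apply_left] using h2
    subst hj
    have hτ : extp i τ = extp i τ' := mul_left_cancel h
    have hττ : τ = τ' := by
      apply Equiv.ext
      intro x
      apply Fin.succAbove_right_injective (p := i)
      rw [← extp_apply_succAbove i τ x, ← extp_apply_succAbove i τ' x, hτ]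
    rw [hττ]
  · simp [Fintype.card_perm, Nat.factorial_succ]

lemma filter_finRange_succAbove (i : Fin (n + 2)) (p : Fin (n + 2) → Bool)
    (hpi : p i = false) :
    (List.finRange (n + 2)).filter p = ((List.finRange (n + 1)).map i.succAbove).filter p := by
  haveI : IsAntisymm (Fin (n + 2)) (· < ·) :=
    ⟨fun a b h1 h2 => absurd h1 (asymm h2)⟩
  refine (fun hp hs₁ hs₂ => List.Perm.eq_of_pairwise' (r := (· < ·)) hs₁ hs₂ hp) ?_ ?_ ?_
  · rw [List.perm_ext_iff_of_nodup (List.Nodup.filter _ (List.nodup_finRange _))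
      (List.Nodup.filter _ ((List.nodup_finRange _).map Fin.succAbove_right_injective))]
    intro c
    simp only [List.mem_filter, List.mem_finRange, true_and, List.mem_map]
    constructor
    · intro hc
      have hci : c ≠ i := fun e => by rw [e, hpi] at hc; exact Bool.false_ne_true hc
      obtain ⟨x, hx⟩ := Fin.exists_succAbove_eq hci
      exact ⟨⟨x, hx⟩, hc⟩
    · rintro ⟨-, hc⟩; exact hc
  · exact List.Pairwise.filter _ (List.pairwise_lt_finRange _)
  · exact List.Pairwise.filter _
      ((List.pairwise_lt_finRange _).map _ (fun a b h => (Fin.strictMono_succAbove i) h))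

lemma map_filter_transfer (i : Fin (n + 2)) (P : Fin (n + 2) → Prop) [DecidablePred P]
    (Q : Fin (n + 1) → Prop) [DecidablePred Q]
    (fσ : Fin (n + 2) → ℍ[ℝ]) (fτ : Fin (n + 1) → ℍ[ℝ])
    (hPi : ¬ P i) (hPQ : ∀ x, P (i.succAbove x) ↔ Q x)
    (hf : ∀ x, Q x → fσ (i.succAbove x) = fτ x) :
    ((List.finRange (n + 2)).filter (fun c => decide (P c))).map fσ
      = ((List.finRange (n + 1)).filter (fun x => decide (Q x))).map fτ := by
  rw [filter_finRange_succAbove i _ (by simp [hPi]), List.filter_map, List.map_map]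
  have hq : (List.finRange (n + 1)).filter ((fun c => decide (P c)) ∘ i.succAbove)
      = (List.finRange (n + 1)).filter (fun x => decide (Q x)) :=
    List.filter_congr (fun x _ => by simp [Function.comp, hPQ x])
  rw [hq]
  apply List.map_congr_left
  intro x hx
  have : Q x := by
    have := (List.mem_filter.mp hx).2
    simpa using this
  exact hf x this

end RdetAux
namespace RdetAux

open Equiv Equiv.Perm Function List

variable {n : ℕ}

lemma extp_pow_apply_self (i : Fin (n + 2)) (τ : Equiv.Perm (Fin (n + 1))) (t : ℕ) :
    (extp i τ ^ t) i = i := by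
  rw [extp_pow]; exact extp_apply_self i (τ ^ t)

lemma extp_pow_apply_succAbove (i : Fin (n + 2)) (τ : Equiv.Perm (Fin (n + 1)))
    (x : Fin (n + 1)) (t : ℕ) :
    (extp i τ ^ t) (i.succAbove x) = i.succAbove ((τ ^ t) x) := by
  rw [extp_pow]; exact extp_apply_succAbove i (τ ^ t) x

lemma sameCycle_extp_self {i : Fin (n + 2)} {τ : Equiv.Perm (Fin (n + 1))} {c : Fin (n + 2)} :
    (extp i τ).SameCycle i c ↔ c = i := by
  constructor
  · intro h
    obtain ⟨k, hk⟩ := sameCycle_iff_nat.mp h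
    rw [extp_pow_apply_self] at hk
    exact hk.symm
  · rintro rfl
    exact Equiv.Perm.SameCycle.refl _ _

lemma cycProd_extp_self (A : Matrix (Fin (n + 2)) (Fin (n + 2)) ℍ[ℝ]) (i : Fin (n + 2))
    (τ : Equiv.Perm (Fin (n + 1))) : cycProdL A (extp i τ) i = A i i := by
  unfold cycProdL
  have h1 : Function.minimalPeriod (⇑(extp i τ)) i = 1 :=
    Function.minimalPeriod_eq_one_iff_isFixedPt.mpr (extp_apply_self i τ)
  rw [h1]
  simp [extp_pow_apply_self]

lemma cycCount_extp (i : Fin (n + 2)) (τ : Equiv.Perm (Fin (n + 1))) :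
    cycCount (extp i τ) = cycCount τ + 1 := by
  unfold cycCount
  have hset : (Finset.univ.filter fun c : Fin (n + 2) => ∀ d, (extp i τ).SameCycle c d → c ≤ d)
      = insert i ((Finset.univ.filter fun x : Fin (n + 1) =>
          ∀ d, τ.SameCycle x d → x ≤ d).image i.succAbove) := by
    ext c
    simp only [Finset.mem_filter, Finset.mem_univ, true_and, Finset.mem_insert,
      Finset.mem_image]
    constructor
    · intro hmin
      by_cases hc : c = i
      · exact Or.inl hc
      · obtain ⟨x, rfl⟩ := Fin.exists_succAbove_eq hc
        exact Or.inr ⟨x, (min_transfer (Fin.strictMono_succAbove i)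
          (extp_pow_apply_succAbove i τ x)).mp hmin, rfl⟩
    · rintro (rfl | ⟨x, hx, rfl⟩)
      · intro d hd
        rw [sameCycle_extp_self.mp hd]
      · exact (min_transfer (Fin.strictMono_succAbove i)
          (extp_pow_apply_succAbove i τ x)).mpr hx
  rw [hset, Finset.card_insert_of_notMem, Finset.card_image_of_injective _
    Fin.succAbove_right_injective]
  simp only [Finset.mem_image]
  rintro ⟨x, -, hx⟩
  exact Fin.succAbove_ne i x hx

lemma filter_min_zero_split (τ : Equiv.Perm (Fin (n + 1))) :
    ((List.finRange (n + 1)).filter fun x => decide (∀ d, τ.SameCycle x d → x ≤ d))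
      = 0 :: ((List.finRange (n + 1)).filter fun x =>
          decide (¬τ.SameCycle 0 x ∧ ∀ d, τ.SameCycle x d → x ≤ d)) := by
  rw [List.finRange_succ, List.filter_cons, List.filter_cons]
  rw [if_pos (decide_eq_true (fun d _ => Fin.zero_le d)),
    if_neg (by simp [Equiv.Perm.SameCycle.refl])]
  congr 1
  apply List.filter_congr
  intro x hx
  obtain ⟨y, -, rfl⟩ := List.mem_map.mp hx
  have hx0 : Fin.succ y ≠ 0 := Fin.succ_ne_zero y
  rw [decide_eq_decide]
  constructor
  · intro h
    exact ⟨fun hsc => hx0 (Fin.le_zero_iff.mp (h 0 hsc.symm)), h⟩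
  · exact And.right

lemma term_extp (A : Matrix (Fin (n + 2)) (Fin (n + 2)) ℍ[ℝ]) (i : Fin (n + 2))
    (τ : Equiv.Perm (Fin (n + 1))) :
    (-1 : ℍ[ℝ]) ^ (n + 2 - cycCount (extp i τ)) *
      (cycProdL A (extp i τ) i *
        (((List.finRange (n + 2)).filter fun c =>
            decide (¬(extp i τ).SameCycle i c ∧ ∀ d, (extp i τ).SameCycle c d → c ≤ d)).map
          (cycProdL A (extp i τ))).prod)
    = A i i * ((-1 : ℍ[ℝ]) ^ (n + 1 - cycCount τ) *
        (cycProdL (A.submatrix i.succAbove i.succAbove) τ 0 *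
          (((List.finRange (n + 1)).filter fun c =>
              decide (¬τ.SameCycle 0 c ∧ ∀ d, τ.SameCycle c d → c ≤ d)).map
            (cycProdL (A.submatrix i.succAbove i.succAbove) τ)).prod)) := by
  set B := A.submatrix i.succAbove i.succAbove with hB
  have hcc : n + 2 - cycCount (extp i τ) = n + 1 - cycCount τ := by
    rw [cycCount_extp]
    omega
  have hlist : ((List.finRange (n + 2)).filter fun c =>
      decide (¬(extp i τ).SameCycle i c ∧ ∀ d, (extp i τ).SameCycle c d → c ≤ d)).map
        (cycProdL A (extp i τ))
      = ((List.finRange (n + 1)).filter fun x =>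
          decide (∀ d, τ.SameCycle x d → x ≤ d)).map (cycProdL B τ) := by
    apply map_filter_transfer i
      (fun c => ¬(extp i τ).SameCycle i c ∧ ∀ d, (extp i τ).SameCycle c d → c ≤ d)
      (fun x => ∀ d, τ.SameCycle x d → x ≤ d)
    · intro h
      exact h.1 (Equiv.Perm.SameCycle.refl _ _)
    · intro x
      constructor
      · intro h
        exact (min_transfer (Fin.strictMono_succAbove i)
          (extp_pow_apply_succAbove i τ x)).mp h.2
      · intro h
        refine ⟨fun hsc => Fin.succAbove_ne i x (sameCycle_extp_self.mp hsc), ?_⟩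
        exact (min_transfer (Fin.strictMono_succAbove i)
          (extp_pow_apply_succAbove i τ x)).mpr h
    · intro x _
      exact cycProdL_transfer A B Fin.succAbove_right_injective
        (extp_pow_apply_succAbove i τ x) (fun t => rfl)
  rw [hlist, filter_min_zero_split, List.map_cons, List.prod_cons, hcc,
    cycProd_extp_self]
  rcases Nat.even_or_odd (n + 1 - cycCount τ) with h | h
  · rw [h.neg_one_pow]
    noncomm_ring
  · rw [h.neg_one_pow]
    noncomm_ring

end RdetAux
namespace RdetAux

open Equiv Equiv.Perm Function List

variable {n : ℕ}

lemma Ψ_apply_self (i j : Fin (n + 2)) (τ : Equiv.Perm (Fin (n + 1))) : Ψ i (j, τ) i = j := by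
  show (Equiv.swap i j) (extp i τ i) = j
  rw [extp_apply_self, Equiv.swap_apply_left]

lemma Ψ_apply_succAbove {i j : Fin (n + 2)} (τ : Equiv.Perm (Fin (n + 1))) {t_j : Fin (n + 1)}
    (hj : i.succAbove t_j = j) (x : Fin (n + 1)) :
    Ψ i (j, τ) (i.succAbove x) = if τ x = t_j then i else i.succAbove (τ x) := by
  show (Equiv.swap i j) (extp i τ (i.succAbove x)) = _
  rw [extp_apply_succAbove]
  rcases eq_or_ne (τ x) t_j with h | h
  · rw [if_pos h, h, hj, Equiv.swap_apply_right]
  · rw [if_neg h, Equiv.swap_apply_of_ne_of_ne (Fin.succAbove_ne i (τ x))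
      (by rw [← hj]; exact fun e => h (Fin.succAbove_right_injective e))]

lemma Ψ_pow_apply {i j : Fin (n + 2)} (τ : Equiv.Perm (Fin (n + 1))) {t_j : Fin (n + 1)}
    (hj : i.succAbove t_j = j) :
    ∀ t, t < Function.minimalPeriod (⇑τ) t_j →
      (Ψ i (j, τ) ^ (t + 1)) i = i.succAbove ((τ ^ t) t_j) := by
  intro t
  induction t with
  | zero =>
    intro _
    simp [pow_one, Ψ_apply_self, ← hj]
  | succ t ih =>
    intro ht
    have ht' : t < Function.minimalPeriod (⇑τ) t_j := Nat.lt_of_succ_lt ht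
    have h1 : (Ψ i (j, τ) ^ (t + 2)) i = Ψ i (j, τ) ((Ψ i (j, τ) ^ (t + 1)) i) := by
      rw [pow_succ']; rfl
    rw [h1, ih ht', Ψ_apply_succAbove τ hj]
    have hstep : τ ((τ ^ t) t_j) = (τ ^ (t + 1)) t_j := by rw [pow_succ']; rfl
    have hne : τ ((τ ^ t) t_j) ≠ t_j := by
      rw [hstep]
      exact perm_pow_ne_self τ t_j (Nat.succ_pos t) ht
    rw [if_neg hne, hstep]

lemma Ψ_pow_period {i j : Fin (n + 2)} (τ : Equiv.Perm (Fin (n + 1))) {t_j : Fin (n + 1)}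
    (hj : i.succAbove t_j = j) :
    (Ψ i (j, τ) ^ (Function.minimalPeriod (⇑τ) t_j + 1)) i = i := by
  have hm : 0 < Function.minimalPeriod (⇑τ) t_j := perm_minimalPeriod_pos τ t_j
  obtain ⟨m', hm'⟩ : ∃ m', Function.minimalPeriod (⇑τ) t_j = m' + 1 :=
    ⟨Function.minimalPeriod (⇑τ) t_j - 1, by omega⟩
  have h2 : (Ψ i (j, τ) ^ (Function.minimalPeriod (⇑τ) t_j + 1)) i
      = Ψ i (j, τ) ((Ψ i (j, τ) ^ Function.minimalPeriod (⇑τ) t_j) i) := by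
    rw [pow_succ']; rfl
  rw [h2, hm', Ψ_pow_apply τ hj m' (by omega), Ψ_apply_succAbove τ hj]
  have hcond : τ ((τ ^ m') t_j) = t_j := by
    have h3 : τ ((τ ^ m') t_j) = (τ ^ (m' + 1)) t_j := by rw [pow_succ']; rfl
    rw [h3, ← hm']
    exact perm_pow_minimalPeriod τ t_j
  rw [if_pos hcond]

lemma Ψ_minimalPeriod {i j : Fin (n + 2)} (τ : Equiv.Perm (Fin (n + 1))) {t_j : Fin (n + 1)}
    (hj : i.succAbove t_j = j) :
    Function.minimalPeriod (⇑(Ψ i (j, τ))) i = Function.minimalPeriod (⇑τ) t_j + 1 := by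
  apply _root_.le_antisymm
  · exact Function.IsPeriodicPt.minimalPeriod_le (Nat.succ_pos _) (Ψ_pow_period τ hj)
  · by_contra hlt
    push_neg at hlt
    have hk0 : 0 < Function.minimalPeriod (⇑(Ψ i (j, τ))) i :=
      perm_minimalPeriod_pos (Ψ i (j, τ)) i
    obtain ⟨k', hk'⟩ : ∃ k', Function.minimalPeriod (⇑(Ψ i (j, τ))) i = k' + 1 :=
      ⟨Function.minimalPeriod (⇑(Ψ i (j, τ))) i - 1, by omega⟩
    have h1 : (Ψ i (j, τ) ^ Function.minimalPeriod (⇑(Ψ i (j, τ))) i) i = i :=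
      perm_pow_minimalPeriod _ i
    rw [hk', Ψ_pow_apply τ hj k' (by omega)] at h1
    exact Fin.succAbove_ne i _ h1

lemma Ψ_sameCycle_self_iff {i j : Fin (n + 2)} (τ : Equiv.Perm (Fin (n + 1)))
    {t_j : Fin (n + 1)} (hj : i.succAbove t_j = j) (x : Fin (n + 1)) :
    (Ψ i (j, τ)).SameCycle i (i.succAbove x) ↔ τ.SameCycle t_j x := by
  constructor
  · intro h
    obtain ⟨k, hk⟩ := sameCycle_iff_nat.mp h
    rw [← perm_pow_apply_mod (Ψ i (j, τ)) i k, Ψ_minimalPeriod τ hj] at hk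
    have hrlt : k % (Function.minimalPeriod (⇑τ) t_j + 1)
        < Function.minimalPeriod (⇑τ) t_j + 1 := Nat.mod_lt _ (Nat.succ_pos _)
    rcases Nat.eq_zero_or_pos (k % (Function.minimalPeriod (⇑τ) t_j + 1)) with h0 | h0
    · rw [h0, pow_zero] at hk
      exact absurd hk.symm (Fin.succAbove_ne i x)
    · obtain ⟨s, hs⟩ : ∃ s, k % (Function.minimalPeriod (⇑τ) t_j + 1) = s + 1 :=
        ⟨k % (Function.minimalPeriod (⇑τ) t_j + 1) - 1, by omega⟩
      rw [hs, Ψ_pow_apply τ hj s (by omega)] at hk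
      exact sameCycle_iff_nat.mpr ⟨s, Fin.succAbove_right_injective hk⟩
  · intro h
    obtain ⟨k, hk⟩ := sameCycle_iff_nat.mp h
    have hklt : k % Function.minimalPeriod (⇑τ) t_j < Function.minimalPeriod (⇑τ) t_j :=
      Nat.mod_lt _ (perm_minimalPeriod_pos τ t_j)
    have hs : ((τ ^ (k % Function.minimalPeriod (⇑τ) t_j)) t_j) = x := by
      rw [perm_pow_apply_mod]; exact hk
    exact sameCycle_iff_nat.mpr ⟨k % Function.minimalPeriod (⇑τ) t_j + 1,
      by rw [Ψ_pow_apply τ hj _ hklt, hs]⟩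

lemma Ψ_pow_apply_succAbove {i j : Fin (n + 2)} (τ : Equiv.Perm (Fin (n + 1)))
    {t_j : Fin (n + 1)} (hj : i.succAbove t_j = j) {x : Fin (n + 1)}
    (hx : ¬τ.SameCycle t_j x) (t : ℕ) :
    (Ψ i (j, τ) ^ t) (i.succAbove x) = i.succAbove ((τ ^ t) x) := by
  induction t with
  | zero => simp
  | succ t ih =>
    have h1 : (Ψ i (j, τ) ^ (t + 1)) (i.succAbove x)
        = Ψ i (j, τ) ((Ψ i (j, τ) ^ t) (i.succAbove x)) := by rw [pow_succ']; rfl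
    rw [h1, ih, Ψ_apply_succAbove τ hj]
    have hstep : τ ((τ ^ t) x) = (τ ^ (t + 1)) x := by rw [pow_succ']; rfl
    have hne : τ ((τ ^ t) x) ≠ t_j := by
      rw [hstep]
      intro he
      exact hx (sameCycle_iff_nat.mpr ⟨t + 1, he⟩).symm
    rw [if_neg hne, hstep]

lemma Ψ_cycProd_i (A : Matrix (Fin (n + 2)) (Fin (n + 2)) ℍ[ℝ]) {i j : Fin (n + 2)}
    (τ : Equiv.Perm (Fin (n + 1))) {t_j : Fin (n + 1)} (hj : i.succAbove t_j = j) :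
    cycProdL A (Ψ i (j, τ)) i = A i j *
      cycProdL ((A.updateCol j fun s => A s i).submatrix i.succAbove i.succAbove) τ t_j := by
  unfold cycProdL
  rw [Ψ_minimalPeriod τ hj, List.range_succ_eq_map, List.map_cons, List.prod_cons,
    List.map_map]
  congr 1
  · show A ((Ψ i (j, τ) ^ 0) i) ((Ψ i (j, τ) ^ (0 + 1)) i) = A i j
    rw [pow_zero, pow_one, Ψ_apply_self]
    rfl
  · congr 1
    apply List.map_congr_left
    intro t ht
    have ht' : t < Function.minimalPeriod (⇑τ) t_j := List.mem_range.mp ht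
    show A ((Ψ i (j, τ) ^ (t + 1)) i) ((Ψ i (j, τ) ^ (t + 1 + 1)) i)
      = (A.updateCol j fun s => A s i) (i.succAbove ((τ ^ t) t_j))
          (i.succAbove ((τ ^ (t + 1)) t_j))
    rw [Ψ_pow_apply τ hj t ht']
    by_cases hlast : t + 1 = Function.minimalPeriod (⇑τ) t_j
    · have h2 : (Ψ i (j, τ) ^ (t + 1 + 1)) i = i := by
        rw [hlast]; exact Ψ_pow_period τ hj
      have h3 : (τ ^ (t + 1)) t_j = t_j := by
        rw [hlast]; exact perm_pow_minimalPeriod τ t_j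
      rw [h2, h3, hj, Matrix.updateCol_apply, if_pos rfl]
    · have h2 : t + 1 < Function.minimalPeriod (⇑τ) t_j := by omega
      rw [Ψ_pow_apply τ hj (t + 1) h2, Matrix.updateCol_apply, if_neg]
      rw [← hj]
      intro he
      exact perm_pow_ne_self τ t_j (Nat.succ_pos t) h2 (Fin.succAbove_right_injective he)

lemma cycCount_Ψ {i j : Fin (n + 2)} (τ : Equiv.Perm (Fin (n + 1))) {t_j : Fin (n + 1)}
    (hj : i.succAbove t_j = j) : cycCount (Ψ i (j, τ)) = cycCount τ := by
  classical
  unfold cycCount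
  have hne : ∀ c : Fin (n + 2), ¬(Ψ i (j, τ)).SameCycle i c → c ≠ i := fun c h e => by
    rw [e] at h
    exact h (Equiv.Perm.SameCycle.refl _ _)
  apply Finset.card_nbij'
    (i := fun c => if h : (Ψ i (j, τ)).SameCycle i c then omin τ t_j
      else (Fin.exists_succAbove_eq (hne c h)).choose)
    (j := fun x => if τ.SameCycle t_j x then omin (Ψ i (j, τ)) i else i.succAbove x)
  · intro c hc
    dsimp only
    have hmin := (Finset.mem_filter.mp hc).2
    by_cases h : (Ψ i (j, τ)).SameCycle i c
    · rw [dif_pos h]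
      exact Finset.mem_filter.mpr ⟨Finset.mem_univ _, omin_min τ t_j⟩
    · rw [dif_neg h]
      set x := (Fin.exists_succAbove_eq (hne c h)).choose with hxdef
      have hsp : i.succAbove x = c := (Fin.exists_succAbove_eq (hne c h)).choose_spec
      have hnx : ¬τ.SameCycle t_j x := fun hh =>
        h (hsp ▸ (Ψ_sameCycle_self_iff τ hj x).mpr hh)
      refine Finset.mem_filter.mpr ⟨Finset.mem_univ _, ?_⟩
      apply (min_transfer (Fin.strictMono_succAbove i) (Ψ_pow_apply_succAbove τ hj hnx)).mp
      rw [hsp]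
      exact hmin
  · intro x hx
    dsimp only
    have hmin := (Finset.mem_filter.mp hx).2
    by_cases h : τ.SameCycle t_j x
    · rw [if_pos h]
      exact Finset.mem_filter.mpr ⟨Finset.mem_univ _, omin_min (Ψ i (j, τ)) i⟩
    · rw [if_neg h]
      exact Finset.mem_filter.mpr ⟨Finset.mem_univ _,
        (min_transfer (Fin.strictMono_succAbove i) (Ψ_pow_apply_succAbove τ hj h)).mpr hmin⟩
  · intro c hc
    dsimp only
    have hmin := (Finset.mem_filter.mp hc).2
    by_cases h : (Ψ i (j, τ)).SameCycle i c
    · rw [dif_pos h, if_pos (omin_sameCycle τ t_j)]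
      exact min_unique (Ψ i (j, τ)) ((omin_sameCycle (Ψ i (j, τ)) i).symm.trans h)
        (omin_min (Ψ i (j, τ)) i) hmin
    · rw [dif_neg h]
      set x := (Fin.exists_succAbove_eq (hne c h)).choose with hxdef
      have hsp : i.succAbove x = c := (Fin.exists_succAbove_eq (hne c h)).choose_spec
      have hnx : ¬τ.SameCycle t_j x := fun hh =>
        h (hsp ▸ (Ψ_sameCycle_self_iff τ hj x).mpr hh)
      rw [if_neg hnx]
      exact hsp
  · intro x hx
    dsimp only
    have hmin := (Finset.mem_filter.mp hx).2
    by_cases h : τ.SameCycle t_j x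
    · rw [if_pos h, dif_pos (omin_sameCycle (Ψ i (j, τ)) i)]
      exact min_unique τ ((omin_sameCycle τ t_j).symm.trans h) (omin_min τ t_j) hmin
    · rw [if_neg h]
      have hni : ¬(Ψ i (j, τ)).SameCycle i (i.succAbove x) := fun hh =>
        h ((Ψ_sameCycle_self_iff τ hj x).mp hh)
      rw [dif_neg hni]
      exact Fin.succAbove_right_injective
        ((Fin.exists_succAbove_eq (hne _ hni)).choose_spec)

end RdetAux
namespace RdetAux

open Equiv Equiv.Perm Function List

variable {n : ℕ}

lemma cycCount_le (τ : Equiv.Perm (Fin (n + 1))) : cycCount τ ≤ n + 1 := by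
  unfold cycCount
  exact (Finset.card_filter_le _ _).trans (by simp)

lemma term_Ψ (A : Matrix (Fin (n + 2)) (Fin (n + 2)) ℍ[ℝ]) {i j : Fin (n + 2)}
    (τ : Equiv.Perm (Fin (n + 1))) {t_j : Fin (n + 1)} (hj : i.succAbove t_j = j) :
    (-1 : ℍ[ℝ]) ^ (n + 2 - cycCount (Ψ i (j, τ))) *
      (cycProdL A (Ψ i (j, τ)) i *
        (((List.finRange (n + 2)).filter fun c =>
            decide (¬(Ψ i (j, τ)).SameCycle i c ∧
              ∀ d, (Ψ i (j, τ)).SameCycle c d → c ≤ d)).map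
          (cycProdL A (Ψ i (j, τ)))).prod)
    = A i j * -((-1 : ℍ[ℝ]) ^ (n + 1 - cycCount τ) *
        (cycProdL ((A.updateCol j fun s => A s i).submatrix i.succAbove i.succAbove) τ t_j *
          (((List.finRange (n + 1)).filter fun c =>
              decide (¬τ.SameCycle t_j c ∧ ∀ d, τ.SameCycle c d → c ≤ d)).map
            (cycProdL ((A.updateCol j fun s => A s i).submatrix
              i.succAbove i.succAbove) τ)).prod)) := by
  set Bu := (A.updateCol j fun s => A s i).submatrix i.succAbove i.succAbove with hBu
  have hle : cycCount τ ≤ n + 1 := cycCount_le τ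
  have hexp : n + 2 - cycCount (Ψ i (j, τ)) = (n + 1 - cycCount τ) + 1 := by
    rw [cycCount_Ψ τ hj]
    omega
  have hlist : ((List.finRange (n + 2)).filter fun c =>
      decide (¬(Ψ i (j, τ)).SameCycle i c ∧ ∀ d, (Ψ i (j, τ)).SameCycle c d → c ≤ d)).map
        (cycProdL A (Ψ i (j, τ)))
      = ((List.finRange (n + 1)).filter fun x =>
          decide (¬τ.SameCycle t_j x ∧ ∀ d, τ.SameCycle x d → x ≤ d)).map (cycProdL Bu τ) := by
    apply map_filter_transfer i
      (fun c => ¬(Ψ i (j, τ)).SameCycle i c ∧ ∀ d, (Ψ i (j, τ)).SameCycle c d → c ≤ d)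
      (fun x => ¬τ.SameCycle t_j x ∧ ∀ d, τ.SameCycle x d → x ≤ d)
    · intro h
      exact h.1 (Equiv.Perm.SameCycle.refl _ _)
    · intro x
      constructor
      · rintro ⟨h1, h2⟩
        have hnx : ¬τ.SameCycle t_j x := fun hh =>
          h1 ((Ψ_sameCycle_self_iff τ hj x).mpr hh)
        exact ⟨hnx, (min_transfer (Fin.strictMono_succAbove i)
          (Ψ_pow_apply_succAbove τ hj hnx)).mp h2⟩
      · rintro ⟨h1, h2⟩
        exact ⟨fun hh => h1 ((Ψ_sameCycle_self_iff τ hj x).mp hh),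
          (min_transfer (Fin.strictMono_succAbove i)
            (Ψ_pow_apply_succAbove τ hj h1)).mpr h2⟩
    · rintro x ⟨h1, -⟩
      apply cycProdL_transfer A Bu Fin.succAbove_right_injective
        (Ψ_pow_apply_succAbove τ hj h1)
      intro t
      show A _ _ = (A.updateCol j fun s => A s i) (i.succAbove ((τ ^ t) x))
        (i.succAbove ((τ ^ (t + 1)) x))
      rw [Matrix.updateCol_apply, if_neg]
      rw [← hj]
      intro he
      exact h1 (sameCycle_iff_nat.mpr
        ⟨t + 1, Fin.succAbove_right_injective he⟩).symm
  rw [hexp, Ψ_cycProd_i A τ hj, hlist, pow_succ, ← hBu]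
  rcases Nat.even_or_odd (n + 1 - cycCount τ) with h | h
  · rw [h.neg_one_pow]
    noncomm_ring
  · rw [h.neg_one_pow]
    noncomm_ring

end RdetAux
/-- Expansion of the `i`-th row determinant by right cofactors along the `i`-th row:
`rdet_i A = Σ_{j=1}^n a_{ij} · R_{ij}`. -/
theorem rdet_cofactor_expansion {n : ℕ} (A : Matrix (Fin (n + 2)) (Fin (n + 2)) ℍ[ℝ])
    (i : Fin (n + 2)) :
    rdet A i = ∑ j, A i j * Rcof A i j := by
  classical
  have h1 : rdet A i = ∑ p : Fin (n + 2) × Equiv.Perm (Fin (n + 1)),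
      (-1 : ℍ[ℝ]) ^ (n + 2 - cycCount (RdetAux.Ψ i p)) *
        (cycProdL A (RdetAux.Ψ i p) i *
          (((List.finRange (n + 2)).filter fun c =>
              decide (¬(RdetAux.Ψ i p).SameCycle i c ∧
                ∀ d, (RdetAux.Ψ i p).SameCycle c d → c ≤ d)).map
            (cycProdL A (RdetAux.Ψ i p))).prod) := by
    rw [rdet]
    exact (Fintype.sum_bijective _ (RdetAux.Ψ_bijective i) _ _ (fun p => rfl)).symm
  rw [h1, Fintype.sum_prod_type]
  apply Finset.sum_congr rfl
  intro j _
  by_cases hji : j = i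
  · subst hji
    have hΨ : ∀ τ : Equiv.Perm (Fin (n + 1)), RdetAux.Ψ j (j, τ) = RdetAux.extp j τ := by
      intro τ
      rw [RdetAux.Ψ, Equiv.swap_self]
      show (Equiv.refl (Fin (n + 2)) : Equiv.Perm (Fin (n + 2))) * RdetAux.extp j τ = _
      rw [← Equiv.Perm.one_def, one_mul]
    simp_rw [hΨ]
    rw [Rcof, if_pos rfl, rdet, Finset.mul_sum]
    apply Finset.sum_congr rfl
    intro τ _
    exact RdetAux.term_extp A j τ
  · obtain ⟨t_j, hj⟩ := Fin.exists_succAbove_eq (show j ≠ i from hji)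
    have hfilter : Finset.univ.filter (fun t : Fin (n + 1) => i.succAbove t = j) = {t_j} := by
      ext t
      simp only [Finset.mem_filter, Finset.mem_univ, true_and, Finset.mem_singleton]
      rw [← hj]
      exact ⟨fun h => Fin.succAbove_right_injective h, fun h => by rw [h]⟩
    rw [Rcof, if_neg hji, hfilter, Finset.sum_singleton, rdet, ← Finset.sum_neg_distrib,
      Finset.mul_sum]
    apply Finset.sum_congr rfl
    intro τ _
    exact RdetAux.term_Ψ A τ hj
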